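/- Let A₁₁, A₁₂, A₂₁, A₂₂ be objects of a category with morphisms f₁, f₂ : A₁₁ → A₁₂, f'₁, f'₂ : A₁₁ → A₂₁, g₁, g₂ : A₂₁ → A₂₂, g'₁, g'₂ : A₁₂ → A₂₂ satisfying gᵢ ∘ f'ⱼ = g'ⱼ ∘ fᵢ for all i, j ∈ {1,2}, and suppose there exist s : A₁₂ → A₁₁ with f₁ ∘ s = f₂ ∘ s = id and s' : A₂₁ → A₁₁ with f'₁ ∘ s' = f'₂ ∘ s' = id. Then the coequalizer of the pair (g'₁ ∘ f₁, g'₂ ∘ f₂) is the cointersection (pushout over A₂₂) of the coequalizer of (g₁, g₂) and the coequalizer of (g'₁, g'₂), whenever these colimits exist. -/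
import Mathlib


open CategoryTheory CategoryTheory.Limits

universe v u

/-- Lack's proposition: in the situation of the displayed square of reflexive data,
the coequalizer of `(g'₁ ∘ f₁, g'₂ ∘ f₂)` is the cointersection (pushout) of the
coequalizer of `(g₁, g₂)` and the coequalizer of `(g'₁, g'₂)`: given coequalizers
`c`, `c'` of these two pairs and a pushout `D` of `c` and `c'`, the induced map
`c ≫ p : A₂₂ ⟶ D` is a coequalizer of `(g'₁ ∘ f₁, g'₂ ∘ f₂)`. -/
theorem coequalizer_diagonal_is_cointersection
    {C : Type u} [Category.{v} C]
    {A₁₁ A₁₂ A₂₁ A₂₂ : C}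
    (f₁ f₂ : A₁₁ ⟶ A₁₂) (f'₁ f'₂ : A₁₁ ⟶ A₂₁)
    (g₁ g₂ : A₂₁ ⟶ A₂₂) (g'₁ g'₂ : A₁₂ ⟶ A₂₂)
    (w₁₁ : f'₁ ≫ g₁ = f₁ ≫ g'₁) (w₁₂ : f'₂ ≫ g₁ = f₁ ≫ g'₂)
    (w₂₁ : f'₁ ≫ g₂ = f₂ ≫ g'₁) (w₂₂ : f'₂ ≫ g₂ = f₂ ≫ g'₂)
    (s : A₁₂ ⟶ A₁₁) (hs₁ : s ≫ f₁ = 𝟙 A₁₂) (hs₂ : s ≫ f₂ = 𝟙 A₁₂)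
    (s' : A₂₁ ⟶ A₁₁) (hs'₁ : s' ≫ f'₁ = 𝟙 A₂₁) (hs'₂ : s' ≫ f'₂ = 𝟙 A₂₁)
    {Q Q' D : C}
    (c : A₂₂ ⟶ Q) (wc : g₁ ≫ c = g₂ ≫ c) (hc : IsColimit (Cofork.ofπ c wc))
    (c' : A₂₂ ⟶ Q') (wc' : g'₁ ≫ c' = g'₂ ≫ c') (hc' : IsColimit (Cofork.ofπ c' wc'))
    (p : Q ⟶ D) (p' : Q' ⟶ D) (hpo : IsPushout c c' p p') :
    Nonempty (IsColimit (Cofork.ofπ (c ≫ p)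
      (show (f₁ ≫ g'₁) ≫ (c ≫ p) = (f₂ ≫ g'₂) ≫ (c ≫ p) by
        have e1 : (f₁ ≫ g'₁) ≫ (c ≫ p) = (f₁ ≫ g'₂) ≫ (c ≫ p) := by
          rw [Category.assoc, Category.assoc, hpo.w, reassoc_of% wc']
        have e3 : (f'₂ ≫ g₁) ≫ (c ≫ p) = (f'₂ ≫ g₂) ≫ (c ≫ p) := by
          rw [Category.assoc, Category.assoc, reassoc_of% wc]
        rw [e1, ← w₁₂, e3, w₂₂]))) := by
  have hg : ∀ {B : C} (x : A₂₂ ⟶ B), (f₁ ≫ g'₁) ≫ x = (f₂ ≫ g'₂) ≫ x → g₁ ≫ x = g₂ ≫ x := by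
    intro B x hx
    calc g₁ ≫ x = (s' ≫ f'₁) ≫ g₁ ≫ x := by rw [hs'₁, Category.id_comp]
      _ = s' ≫ (f'₁ ≫ g₁) ≫ x := by simp only [Category.assoc]
      _ = s' ≫ (f₁ ≫ g'₁) ≫ x := by rw [w₁₁]
      _ = s' ≫ (f₂ ≫ g'₂) ≫ x := by rw [hx]
      _ = s' ≫ (f'₂ ≫ g₂) ≫ x := by rw [w₂₂]
      _ = (s' ≫ f'₂) ≫ g₂ ≫ x := by simp only [Category.assoc]
      _ = g₂ ≫ x := by rw [hs'₂, Category.id_comp]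
  have hg' : ∀ {B : C} (x : A₂₂ ⟶ B), (f₁ ≫ g'₁) ≫ x = (f₂ ≫ g'₂) ≫ x → g'₁ ≫ x = g'₂ ≫ x := by
    intro B x hx
    calc g'₁ ≫ x = (s ≫ f₁) ≫ g'₁ ≫ x := by rw [hs₁, Category.id_comp]
      _ = s ≫ (f₁ ≫ g'₁) ≫ x := by simp only [Category.assoc]
      _ = s ≫ (f₂ ≫ g'₂) ≫ x := by rw [hx]
      _ = (s ≫ f₂) ≫ g'₂ ≫ x := by simp only [Category.assoc]
      _ = g'₂ ≫ x := by rw [hs₂, Category.id_comp]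
  have hcm : ∀ (sk : Cofork (f₁ ≫ g'₁) (f₂ ≫ g'₂)),
      c ≫ Cofork.IsColimit.desc hc sk.π (hg sk.π sk.condition)
        = c' ≫ Cofork.IsColimit.desc hc' sk.π (hg' sk.π sk.condition) := by
    intro sk
    have h1 := Cofork.IsColimit.π_desc' hc sk.π (hg sk.π sk.condition)
    have h2 := Cofork.IsColimit.π_desc' hc' sk.π (hg' sk.π sk.condition)
    simp only [Cofork.π_ofπ] at h1 h2
    rw [h1, h2]
  have hep : Epi c := epi_of_isColimit_cofork hc
  have hep' : Epi c' := epi_of_isColimit_cofork hc'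
  refine ⟨Cofork.IsColimit.mk _
    (fun sk => hpo.desc (Cofork.IsColimit.desc hc sk.π (hg sk.π sk.condition))
      (Cofork.IsColimit.desc hc' sk.π (hg' sk.π sk.condition)) (hcm sk))
    (fun sk => ?_) (fun sk t' ht' => ?_)⟩
  · have h1 := Cofork.IsColimit.π_desc' hc sk.π (hg sk.π sk.condition)
    simp only [Cofork.π_ofπ] at h1
    rw [Cofork.π_ofπ, Category.assoc, hpo.inl_desc, h1]
  · have h1 := Cofork.IsColimit.π_desc' hc sk.π (hg sk.π sk.condition)
    have h2 := Cofork.IsColimit.π_desc' hc' sk.π (hg' sk.π sk.condition)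
    simp only [Cofork.π_ofπ] at h1 h2
    rw [Cofork.π_ofπ] at ht'
    refine hpo.hom_ext ?_ ?_
    · rw [hpo.inl_desc, ← cancel_epi c, h1, ← ht', Category.assoc]
    · rw [hpo.inr_desc, ← cancel_epi c', h2, ← ht', ← reassoc_of% hpo.w, Category.assoc]
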